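/- Let φ₁, φ₂, φ₁', φ₂' be continuous semipositive metrics on a line bundle L over an n-dimensional reduced proper scheme over a non-Archimedean field, and let d(φ,ψ) = sup_{X^an}|φ−ψ| be the sup-distance. Then |E(L,φ₁,φ₂) − E(L,φ₁',φ₂')| ≤ (d(φ₁,φ₁') + d(φ₂,φ₂'))·deg_L(X). -/

import Mathlib

open MeasureTheory


lemma tri_sum (n : ℕ) (g : ℕ → ℕ → ℝ) :
    ∑ j ∈ Finset.range (n+1), ∑ q ∈ Finset.range (n - j), (g j (q+1) - g (j+1) q)
      = ∑ s ∈ Finset.range (n+1), g 0 s - ∑ p ∈ Finset.range (n+1), g p 0 := by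
  induction n with
  | zero => simp
  | succ n ih =>
    have h1 : ∀ j ∈ Finset.range (n+1),
        ∑ q ∈ Finset.range (n+1-j), (g j (q+1) - g (j+1) q)
          = (∑ q ∈ Finset.range (n-j), (g j (q+1) - g (j+1) q))
            + (g j (n-j+1) - g (j+1) (n-j)) := by
      intro j hj
      rw [Finset.mem_range] at hj
      have : n + 1 - j = (n - j) + 1 := by omega
      rw [this, Finset.sum_range_succ]
    rw [Finset.sum_range_succ (fun j => ∑ q ∈ Finset.range (n+1-j), (g j (q+1) - g (j+1) q))]
    simp only [Nat.sub_self, Finset.range_zero, Finset.sum_empty, add_zero]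
    rw [Finset.sum_congr rfl h1, Finset.sum_add_distrib, ih]
    have h2 : ∀ j ∈ Finset.range (n+1),
        g j (n-j+1) - g (j+1) (n-j)
          = (fun j => g j (n+1-j)) j - (fun j => g j (n+1-j)) (j+1) := by
      intro j hj
      rw [Finset.mem_range] at hj
      simp only
      congr 2 <;> omega
    rw [Finset.sum_congr rfl h2, Finset.sum_range_sub' (fun j => g j (n+1-j))]
    have e1 : ∑ s ∈ Finset.range (n+1+1), g 0 s
        = ∑ s ∈ Finset.range (n+1), g 0 s + g 0 (n+1) := Finset.sum_range_succ _ _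
    have e2 : ∑ p ∈ Finset.range (n+1+1), g p 0
        = ∑ p ∈ Finset.range (n+1), g p 0 + g (n+1) 0 := Finset.sum_range_succ _ _
    rw [e1, e2]
    have e3 : n + 1 - 0 = n + 1 := by omega
    have e4 : n + 1 - (n+1) = 0 := by omega
    rw [e3, e4]
    ring

example {X : Type} [TopologicalSpace X] [CompactSpace X] [MeasurableSpace X] [BorelSpace X]
    (μ : Measure X) [IsFiniteMeasure μ] (f : C(X, ℝ)) : Integrable f μ := by
  exact f.continuous.integrable_of_hasCompactSupport (HasCompactSupport.of_compactSpace f)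

example {X : Type} [TopologicalSpace X] [CompactSpace X] [MeasurableSpace X] [BorelSpace X]
    (μ : Measure X) [IsFiniteMeasure μ] (f : C(X, ℝ)) :
    |∫ x, f x ∂μ| ≤ ‖f‖ * (μ Set.univ).toReal := by
  rw [← Real.norm_eq_abs]
  exact norm_integral_le_of_norm_le_const (ae_of_all _ fun x => f.norm_coe_le_norm x)
section EnergyAux

variable {Xan M : Type} [TopologicalSpace Xan] [CompactSpace Xan]
  [MeasurableSpace Xan] [BorelSpace Xan]

/-- The mixed tuple with `p` copies of `a`, then `q` copies of `b`, then `c`. -/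
def Ttup (n : ℕ) (a b c : M) (p q : ℕ) : Fin n → M :=
  fun i => if (i : ℕ) < p then a else if (i : ℕ) < p + q then b else c

lemma key_cocycle (n : ℕ)
    (φdiff : M → M → C(Xan, ℝ))
    (hcocycle : ∀ a b c : M, φdiff a b + φdiff b c = φdiff a c)
    (μ : (Fin n → M) → Measure Xan)
    (hfin : ∀ v, IsFiniteMeasure (μ v))
    (hsymm : ∀ (v : Fin n → M) (σ : Equiv.Perm (Fin n)), μ (v ∘ σ) = μ v)
    (hparts : ∀ (i : Fin n) (u₁ u₂ v₁ v₂ : M) (w : Fin n → M),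
      ((∫ x, φdiff u₁ u₂ x ∂ μ (Function.update w i v₁)) -
        ∫ x, φdiff u₁ u₂ x ∂ μ (Function.update w i v₂)) =
      ((∫ x, φdiff v₁ v₂ x ∂ μ (Function.update w i u₁)) -
        ∫ x, φdiff v₁ v₂ x ∂ μ (Function.update w i u₂)))
    (a b c : M) :
    (∑ j ∈ Finset.range (n + 1),
        ∫ x, φdiff a c x ∂ μ (fun i => if (i : ℕ) < j then a else c))
      = (∑ j ∈ Finset.range (n + 1),
          ∫ x, φdiff a b x ∂ μ (fun i => if (i : ℕ) < j then a else b))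
        + ∑ j ∈ Finset.range (n + 1),
            ∫ x, φdiff b c x ∂ μ (fun i => if (i : ℕ) < j then b else c) := by
  haveI := hfin
  -- integrability
  have hint : ∀ (f : C(Xan, ℝ)) (v : Fin n → M), Integrable f (μ v) := fun f v =>
    f.continuous.integrable_of_hasCompactSupport (HasCompactSupport.of_compactSpace f)
  -- additivity of the integrand
  have hadd : ∀ (x y z : M) (v : Fin n → M),
      ∫ t, φdiff x z t ∂ μ v = (∫ t, φdiff x y t ∂ μ v) + ∫ t, φdiff y z t ∂ μ v := by
    intro x y z v
    rw [← integral_add (hint _ _) (hint _ _)]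
    congr 1
    funext t
    have := DFunLike.congr_fun (hcocycle x y z) t
    simpa using this.symm
  -- abbreviation for the mixed integrals
  set g : M → M → ℕ → ℕ → ℝ :=
    fun x y p q => ∫ t, φdiff x y t ∂ μ (Ttup n a b c p q) with hg
  -- tuple identities
  have hT0 : ∀ j : ℕ, (fun i : Fin n => if (i : ℕ) < j then a else c) = Ttup n a b c j 0 := by
    intro j; funext i; simp only [Ttup]
    split_ifs <;> first | rfl | (exfalso; omega)
  have hTbc : ∀ j : ℕ, (fun i : Fin n => if (i : ℕ) < j then b else c) = Ttup n a b c 0 j := by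
    intro j; funext i; simp only [Ttup, Nat.zero_add]
    have := i.isLt
    split_ifs <;> first | rfl | (exfalso; omega)
  have hTab : ∀ j : ℕ, j ≤ n →
      (fun i : Fin n => if (i : ℕ) < j then a else b) = Ttup n a b c j (n - j) := by
    intro j hj; funext i; simp only [Ttup]
    have := i.isLt
    split_ifs <;> first | rfl | (exfalso; omega)
  -- the step identity, from integration by parts
  have hstep : ∀ p q : ℕ, p + q < n →
      g a b p (q+1) - g a b p q = g b c (p+1) q - g b c p (q+1) := by
    intro p q h
    have h1 : Ttup n a b c p (q+1) = Function.update (Ttup n a b c p q) ⟨p+q, h⟩ b := by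
      funext k
      simp only [Ttup, Function.update_apply, Fin.ext_iff]
      split_ifs <;> first | rfl | (exfalso; omega)
    have h2 : Ttup n a b c p q = Function.update (Ttup n a b c p q) ⟨p+q, h⟩ c := by
      funext k
      simp only [Ttup, Function.update_apply, Fin.ext_iff]
      split_ifs <;> first | rfl | (exfalso; omega)
    have h3 : μ (Function.update (Ttup n a b c p q) ⟨p+q, h⟩ a) = μ (Ttup n a b c (p+1) q) := by
      have hfun : Function.update (Ttup n a b c p q) ⟨p+q, h⟩ a
          = (Ttup n a b c (p+1) q) ∘ (Equiv.swap (⟨p, by omega⟩ : Fin n) ⟨p+q, h⟩) := by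
        funext k
        simp only [Ttup, Function.update_apply, Function.comp_apply, Equiv.swap_apply_def,
          Fin.ext_iff, apply_ite (Fin.val)]
        split_ifs <;> first | rfl | (exfalso; omega)
      rw [hfun, hsymm]
    have hp := hparts ⟨p+q, h⟩ a b b c (Ttup n a b c p q)
    rw [← h1, ← h2, h3] at hp
    simpa [hg] using hp
  -- telescoping in q
  have htel : ∀ j : ℕ,
      g a b j (n - j) - g a b j 0
        = ∑ q ∈ Finset.range (n - j), (g b c (j+1) q - g b c j (q+1)) := by
    intro j
    rw [← Finset.sum_range_sub (fun q => g a b j q) (n - j)]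
    apply Finset.sum_congr rfl
    intro q hq
    rw [Finset.mem_range] at hq
    exact hstep j q (by omega)
  -- now the main computation
  calc (∑ j ∈ Finset.range (n + 1),
        ∫ x, φdiff a c x ∂ μ (fun i => if (i : ℕ) < j then a else c))
      = ∑ j ∈ Finset.range (n + 1), (g a b j 0 + g b c j 0) := by
        apply Finset.sum_congr rfl
        intro j _
        rw [hT0 j, hadd a b c]
    _ = ∑ j ∈ Finset.range (n + 1), g a b j 0 + ∑ j ∈ Finset.range (n + 1), g b c j 0 :=
        Finset.sum_add_distrib
    _ = (∑ j ∈ Finset.range (n + 1), g a b j (n - j))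
          + ∑ j ∈ Finset.range (n + 1), g b c 0 j := by
        have h5 : ∑ j ∈ Finset.range (n+1), (g a b j (n - j) - g a b j 0)
            = ∑ j ∈ Finset.range (n+1), ∑ q ∈ Finset.range (n - j),
                (g b c (j+1) q - g b c j (q+1)) :=
          Finset.sum_congr rfl (fun j _ => htel j)
        have h6 : ∑ j ∈ Finset.range (n+1), ∑ q ∈ Finset.range (n - j),
              ((fun p q => g b c p q) j (q+1) - (fun p q => g b c p q) (j+1) q)
            = ∑ s ∈ Finset.range (n+1), g b c 0 s - ∑ p ∈ Finset.range (n+1), g b c p 0 :=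
          tri_sum n (fun p q => g b c p q)
        simp only [Finset.sum_sub_distrib] at h5 h6
        linarith
    _ = (∑ j ∈ Finset.range (n + 1),
          ∫ x, φdiff a b x ∂ μ (fun i => if (i : ℕ) < j then a else b))
        + ∑ j ∈ Finset.range (n + 1),
            ∫ x, φdiff b c x ∂ μ (fun i => if (i : ℕ) < j then b else c) := by
        congr 1
        · apply Finset.sum_congr rfl
          intro j hj
          rw [Finset.mem_range] at hj
          rw [hTab j (by omega)]
        · apply Finset.sum_congr rfl
          intro j _
          rw [hTbc j]

end EnergyAux


/-- **Lipschitz continuity of the energy** (Proposition 2.18(k)).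
Abstract setting: `Xan` is the compact Berkovich analytification of an
`n`-dimensional reduced proper scheme, `M` is the collection of continuous
semipositive metrics on a line bundle `L`, `φdiff φ ψ` is the continuous
function `φ − ψ` on `Xan` (so `d(φ,ψ) = sup|φ−ψ| = ‖φdiff φ ψ‖`), and `μ v`
are the mixed Chambert-Loir measures `dd^cv₁ ∧ ⋯ ∧ dd^cv_n`: positive Radon
measures with total mass `deg_L(X)`, symmetric in the metrics and satisfying
the integration-by-parts symmetry (polarized form `hparts`).  The energy is
`E(φ,ψ) = (1/(n+1)) Σ_{j=0}^n ∫ (φ−ψ) (dd^cφ)^j ∧ (dd^cψ)^{n−j}`.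
Then `|E(φ₁,φ₂) − E(φ₁',φ₂')| ≤ (d(φ₁,φ₁') + d(φ₂,φ₂'))·deg_L(X)`. -/
theorem stmt10 {Xan M : Type} [TopologicalSpace Xan] [CompactSpace Xan]
    [MeasurableSpace Xan] [BorelSpace Xan]
    (n : ℕ) (degL : ℝ)
    (φdiff : M → M → C(Xan, ℝ))
    (hcocycle : ∀ a b c : M, φdiff a b + φdiff b c = φdiff a c)
    (μ : (Fin n → M) → Measure Xan)
    (hfin : ∀ v, IsFiniteMeasure (μ v))
    (hmass : ∀ v, (μ v Set.univ).toReal = degL)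
    (hsymm : ∀ (v : Fin n → M) (σ : Equiv.Perm (Fin n)), μ (v ∘ σ) = μ v)
    (hparts : ∀ (i : Fin n) (u₁ u₂ v₁ v₂ : M) (w : Fin n → M),
      ((∫ x, φdiff u₁ u₂ x ∂ μ (Function.update w i v₁)) -
        ∫ x, φdiff u₁ u₂ x ∂ μ (Function.update w i v₂)) =
      ((∫ x, φdiff v₁ v₂ x ∂ μ (Function.update w i u₁)) -
        ∫ x, φdiff v₁ v₂ x ∂ μ (Function.update w i u₂)))
    (E : M → M → ℝ)
    (hE : ∀ φ ψ : M, E φ ψ = (1 / (n + 1 : ℝ)) *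
      ∑ j ∈ Finset.range (n + 1),
        ∫ x, φdiff φ ψ x ∂ μ (fun i => if (i : ℕ) < j then φ else ψ))
    (φ₁ φ₂ φ₁' φ₂' : M) :
    |E φ₁ φ₂ - E φ₁' φ₂'| ≤ (‖φdiff φ₁ φ₁'‖ + ‖φdiff φ₂ φ₂'‖) * degL := by
  haveI := hfin
  set F : M → M → ℝ := fun a b => ∑ j ∈ Finset.range (n + 1),
    ∫ x, φdiff a b x ∂ μ (fun i => if (i : ℕ) < j then a else b) with hF
  have hco : ∀ a b c : M, F a c = F a b + F b c := fun a b c =>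
    key_cocycle n φdiff hcocycle μ hfin hsymm hparts a b c
  have hdeg : 0 ≤ degL := by
    rw [← hmass (fun _ => φ₁)]; exact ENNReal.toReal_nonneg
  have hbd : ∀ a b : M, |F a b| ≤ ((n : ℝ) + 1) * (‖φdiff a b‖ * degL) := by
    intro a b
    calc |F a b| ≤ ∑ j ∈ Finset.range (n + 1),
          |∫ x, φdiff a b x ∂ μ (fun i => if (i : ℕ) < j then a else b)| :=
          Finset.abs_sum_le_sum_abs _ _
      _ ≤ ∑ j ∈ Finset.range (n + 1), ‖φdiff a b‖ * degL := by
          apply Finset.sum_le_sum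
          intro j _
          rw [← hmass (fun i => if (i : ℕ) < j then a else b), ← Real.norm_eq_abs]
          exact norm_integral_le_of_norm_le_const
            (ae_of_all _ fun x => (φdiff a b).norm_coe_le_norm x)
      _ = ((n : ℝ) + 1) * (‖φdiff a b‖ * degL) := by
          rw [Finset.sum_const, Finset.card_range, nsmul_eq_mul]
          push_cast; ring
  have hnorm : ‖φdiff φ₂' φ₂‖ = ‖φdiff φ₂ φ₂'‖ := by
    have h0 : φdiff φ₂ φ₂ = 0 := add_eq_left.mp (hcocycle φ₂ φ₂ φ₂)
    have h1 : φdiff φ₂ φ₂' + φdiff φ₂' φ₂ = 0 := by rw [hcocycle, h0]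
    have h2 : φdiff φ₂' φ₂ = -(φdiff φ₂ φ₂') := eq_neg_of_add_eq_zero_right h1
    rw [h2, norm_neg]
  have hEF : ∀ φ ψ : M, E φ ψ = (1 / ((n : ℝ) + 1)) * F φ ψ := fun φ ψ => hE φ ψ
  have hdecomp : E φ₁ φ₂ - E φ₁' φ₂' = (1 / ((n : ℝ) + 1)) * (F φ₁ φ₁' + F φ₂' φ₂) := by
    rw [hEF, hEF]
    have e1 : F φ₁ φ₂ = F φ₁ φ₁' + F φ₁' φ₂ := hco φ₁ φ₁' φ₂
    have e2 : F φ₁' φ₂ = F φ₁' φ₂' + F φ₂' φ₂ := hco φ₁' φ₂' φ₂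
    rw [e1, e2]; ring
  have hN : (0 : ℝ) < (n : ℝ) + 1 := by positivity
  calc |E φ₁ φ₂ - E φ₁' φ₂'|
      = |1 / ((n : ℝ) + 1)| * |F φ₁ φ₁' + F φ₂' φ₂| := by rw [hdecomp, abs_mul]
    _ ≤ (1 / ((n : ℝ) + 1)) *
          (((n : ℝ) + 1) * (‖φdiff φ₁ φ₁'‖ * degL) + ((n : ℝ) + 1) * (‖φdiff φ₂' φ₂‖ * degL)) := by
        rw [abs_of_pos (by positivity)]
        exact mul_le_mul_of_nonneg_left
          ((abs_add_le _ _).trans (add_le_add (hbd _ _) (hbd _ _))) (by positivity)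
    _ = (‖φdiff φ₁ φ₁'‖ + ‖φdiff φ₂ φ₂'‖) * degL := by
        rw [hnorm]; field_simp
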